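/- Let n ≥ 3 and 2 ≤ k ≤ n. Let Λ = (λ_1,…,λ_n) ∈ ℝ^n and suppose that A_Λ ∈ Γ̄_k^+. Then min_{1 ≤ i ≤ n} λ_i ≥ ((2k−n)/(2n(k−1))) · Σ_{i=1}^n λ_i. -/

import Mathlib

/-- The `k`-th elementary symmetric polynomial of `x : Fin n → ℝ`. -/
noncomputable def sigmaElem (n k : ℕ) (x : Fin n → ℝ) : ℝ :=
  ∑ s ∈ Finset.univ.powersetCard k, ∏ i ∈ s, x i

/-- The Gårding cone `Γ_k^+ ⊆ ℝ^n`: the connected component of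
`{σ_k > 0}` containing `(1, …, 1)`. -/
def GammaPlus (n k : ℕ) : Set (Fin n → ℝ) :=
  connectedComponentIn {x | 0 < sigmaElem n k x} (fun _ => 1)

/-- `A_Λ = Λ − (Σ_i λ_i / (2(n−1))) · (1,…,1)`. -/
noncomputable def ALam (n : ℕ) (Λ : Fin n → ℝ) : Fin n → ℝ :=
  fun i => Λ i - (∑ j, Λ j) / (2 * ((n : ℝ) - 1))

open Polynomial Finset

lemma esymm_fin (ρ : Multiset ℝ) (q : ℕ) :
    ρ.esymm q = ∑ t ∈ (univ : Finset (Fin ρ.toList.length)).powersetCard q,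
      ∏ i ∈ t, ρ.toList.get i := by
  rw [← Finset.esymm_map_val, Fin.univ_val_map, List.ofFn_get, Multiset.coe_toList]

lemma esymm_pos (ρ : Multiset ℝ) (hρ : ∀ x ∈ ρ, 0 < x) (q : ℕ) (hq : q ≤ Multiset.card ρ) :
    0 < ρ.esymm q := by
  rw [esymm_fin]
  apply Finset.sum_pos
  · intro t ht
    refine Finset.prod_pos fun i _ => hρ _ ?_
    have : ρ.toList.get i ∈ ρ.toList := by simpa using List.get_mem ρ.toList i.1 i.2
    rwa [← Multiset.mem_coe, Multiset.coe_toList] at this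
  · apply Finset.powersetCard_nonempty.2
    simpa [Multiset.length_toList] using hq

lemma amhm_fin {N : ℕ} (f : Fin N → ℝ) (hf : ∀ i, 0 < f i) :
    (N : ℝ) ^ 2 ≤ (∑ i, f i) * (∑ i, (f i)⁻¹) := by
  have key := Finset.sum_mul_sq_le_sq_mul_sq univ (fun i => Real.sqrt (f i))
      (fun i => (Real.sqrt (f i))⁻¹)
  have h1 : ∀ i : Fin N, Real.sqrt (f i) * (Real.sqrt (f i))⁻¹ = 1 := fun i =>
    mul_inv_cancel₀ (ne_of_gt (Real.sqrt_pos.2 (hf i)))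
  have h2 : ∀ i : Fin N, Real.sqrt (f i) ^ 2 = f i := fun i => Real.sq_sqrt (hf i).le
  have h3 : ∀ i : Fin N, ((Real.sqrt (f i))⁻¹) ^ 2 = (f i)⁻¹ := by
    intro i; rw [← Real.sqrt_inv]; exact Real.sq_sqrt (inv_nonneg.2 (hf i).le)
  simp only [h1, h2, h3, Finset.sum_const, Finset.card_univ, Fintype.card_fin,
    nsmul_eq_mul, mul_one] at key
  simpa using key

lemma sum_prod_erase {N : ℕ} (hN : 1 ≤ N) (f : Fin N → ℝ) :
    ∑ t ∈ (univ : Finset (Fin N)).powersetCard (N - 1), ∏ i ∈ t, f i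
      = ∑ i, ∏ j ∈ univ.erase i, f j := by
  rw [show ∑ i, ∏ j ∈ univ.erase i, f j
      = ∑ t ∈ (univ : Finset (Fin N)).powersetCard 1, ∏ j ∈ tᶜ, f j by
    rw [Finset.powersetCard_one]
    rw [Finset.sum_map]
    apply Finset.sum_congr rfl
    intro i _
    congr 1
    simp [Finset.compl_singleton]]
  refine Finset.sum_nbij' (fun t => tᶜ) (fun t => tᶜ) ?_ ?_ ?_ ?_ ?_
  · intro t ht
    simp only [Finset.mem_powersetCard_univ] at ht ⊢
    rw [Finset.card_compl, ht, Fintype.card_fin]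
    omega
  · intro t ht
    simp only [Finset.mem_powersetCard_univ] at ht ⊢
    rw [Finset.card_compl, ht, Fintype.card_fin]
  · intro t _; simp
  · intro t _; simp
  · intro t _
    congr 1
    simp

lemma esymm_amhm (ρ : Multiset ℝ) (hρ : ∀ x ∈ ρ, 0 < x) (hc : 0 < Multiset.card ρ) :
    (Multiset.card ρ : ℝ) ^ 2 * ρ.esymm (Multiset.card ρ)
      ≤ ρ.esymm 1 * ρ.esymm (Multiset.card ρ - 1) := by
  set N := ρ.toList.length with hNdef
  have hcard : Multiset.card ρ = N := (Multiset.length_toList ρ).symm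
  set f : Fin N → ℝ := ρ.toList.get with hfdef
  have hf : ∀ i, 0 < f i := by
    intro i
    apply hρ
    have : ρ.toList.get i ∈ ρ.toList := by simp [List.get_mem]
    rwa [← Multiset.mem_coe, Multiset.coe_toList] at this
  have e1 : ρ.esymm 1 = ∑ i, f i := by
    rw [esymm_fin, Finset.powersetCard_one, Finset.sum_map]
    apply Finset.sum_congr rfl
    intro i _
    simp [hfdef]
  have ed : ρ.esymm N = ∏ i, f i := by
    have hc2 : N = (univ : Finset (Fin N)).card := by simp
    rw [esymm_fin]
    conv_lhs => rw [hc2, Finset.powersetCard_self]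
    rw [Finset.sum_singleton]
  have ed1 : ρ.esymm (N - 1) = (∏ i, f i) * ∑ i, (f i)⁻¹ := by
    rw [esymm_fin, sum_prod_erase (by omega) f, Finset.mul_sum]
    apply Finset.sum_congr rfl
    intro i _
    rw [eq_mul_inv_iff_mul_eq₀ (ne_of_gt (hf i))]
    exact Finset.prod_erase_mul univ f (mem_univ i)
  rw [hcard, e1, ed, ed1]
  have := amhm_fin f hf
  have hp : 0 < ∏ i, f i := Finset.prod_pos fun i _ => hf i
  nlinarith [this, hp, Finset.sum_pos (fun i (_ : i ∈ univ) => hf i) ⟨⟨0, by omega⟩, mem_univ _⟩]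

lemma iter_deriv_facts (p : ℝ[X]) (hp : p ≠ 0) (hsp : Multiset.card p.roots = p.natDegree) :
    ∀ m, m ≤ p.natDegree → (derivative^[m] p ≠ 0 ∧ (derivative^[m] p).natDegree = p.natDegree - m
      ∧ Multiset.card (derivative^[m] p).roots = p.natDegree - m) := by
  intro m
  induction m with
  | zero => intro _; exact ⟨hp, by simp, by simpa using hsp⟩
  | succ m ih =>
    intro hm1
    obtain ⟨hq0, hqdeg, hqroots⟩ := ih (by omega)
    set q := derivative^[m] p with hq
    have hqpos : 0 < q.natDegree := by omega
    have hd0 : derivative q ≠ 0 := by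
      intro h
      have := natDegree_eq_zero_of_derivative_eq_zero h
      omega
    have hddeg : (derivative q).natDegree = p.natDegree - (m + 1) := by
      have := degree_derivative_eq q hqpos
      have h2 := natDegree_eq_of_degree_eq_some this
      omega
    have hub : Multiset.card (derivative q).roots ≤ p.natDegree - (m + 1) := by
      simpa [hddeg] using card_roots' (derivative q)
    have hlb := card_roots_le_derivative q
    constructor
    · rwa [Function.iterate_succ_apply']
    constructor
    · rwa [Function.iterate_succ_apply']
    · rw [Function.iterate_succ_apply', ← hq]
      omega

lemma poly_core (p : ℝ[X]) (hmo : p.Monic) (hsp : Multiset.card p.roots = p.natDegree)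
    (d : ℕ) (hd : 0 < d) (hdN : d ≤ p.natDegree)
    (hnn : ∀ j, p.natDegree - d ≤ j → 0 ≤ p.coeff j)
    (hpos : 0 < p.coeff (p.natDegree - d)) :
    ∃ ρ : Multiset ℝ, Multiset.card ρ = d ∧ (∀ x ∈ ρ, 0 < x) ∧
      ∀ jj, jj ≤ d →
        (((jj + (p.natDegree - d)).descFactorial (p.natDegree - d) : ℝ))
            * p.coeff (jj + (p.natDegree - d))
          = ((p.natDegree.descFactorial (p.natDegree - d) : ℝ)) * ρ.esymm (d - jj) := by
  set N := p.natDegree with hN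
  set m := N - d with hm
  obtain ⟨hg0, hgdeg, hgroots⟩ := iter_deriv_facts p hmo.ne_zero hsp m (by omega)
  set g := derivative^[m] p with hg
  have hgd : g.natDegree = d := by omega
  have hgr : Multiset.card g.roots = d := by omega
  have gc : ∀ jj, g.coeff jj = (((jj + m).descFactorial m : ℝ)) * p.coeff (jj + m) := by
    intro jj
    rw [hg, Polynomial.coeff_iterate_derivative, nsmul_eq_mul]
  have gnn : ∀ jj, 0 ≤ g.coeff jj := by
    intro jj
    rw [gc]
    exact mul_nonneg (Nat.cast_nonneg _) (hnn _ (by omega))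
  have g0pos : 0 < g.coeff 0 := by
    rw [gc]
    have : 0 < m.descFactorial m := by rw [Nat.descFactorial_self]; exact Nat.factorial_pos m
    simpa using mul_pos (by exact_mod_cast this : (0:ℝ) < (m.descFactorial m : ℝ)) hpos
  -- roots are negative
  have hneg : ∀ r ∈ g.roots, r < 0 := by
    intro r hr
    obtain ⟨_, hroot⟩ := mem_roots'.1 hr
    by_contra hcon
    push_neg at hcon
    have heval : g.eval r = ∑ i ∈ range (g.natDegree + 1), g.coeff i * r ^ i :=
      eval_eq_sum_range r
    rw [Finset.sum_range_succ'] at heval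
    have h0 : (0:ℝ) < g.coeff 0 * r ^ 0 := by simpa using g0pos
    have hrest : 0 ≤ ∑ i ∈ range g.natDegree, g.coeff (i + 1) * r ^ (i + 1) :=
      Finset.sum_nonneg fun i _ => mul_nonneg (gnn _) (pow_nonneg hcon _)
    have : 0 < g.eval r := by rw [heval]; linarith
    rw [hroot.eq_zero] at this
    exact lt_irrefl _ this
  -- representation
  have hsplits : Splits g := (Polynomial.splits_iff_card_roots).2 (by omega)
  have hrep := hsplits.eq_prod_roots
  set ρ : Multiset ℝ := g.roots.map (fun r => -r) with hρ
  have hρcard : Multiset.card ρ = d := by rw [hρ, Multiset.card_map]; omega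
  have hρpos : ∀ x ∈ ρ, 0 < x := by
    intro x hx
    obtain ⟨r, hr, rfl⟩ := Multiset.mem_map.1 hx
    simpa using hneg r hr
  have hmapeq : (Multiset.map (fun a => X - C a) g.roots).prod
      = (Multiset.map (fun a => (X : ℝ[X]) + C a) ρ).prod := by
    rw [hρ, Multiset.map_map]
    apply congrArg
    apply Multiset.map_congr rfl
    intro r _
    simp [sub_eq_add_neg]
  have hrep2 : g = C g.leadingCoeff * (ρ.map (fun a => X + C a)).prod := by
    conv_lhs => rw [hrep]
    rw [hmapeq]
  have hlead : g.leadingCoeff = (N.descFactorial m : ℝ) := by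
    rw [Polynomial.leadingCoeff, hgd, gc]
    have : d + m = N := by omega
    rw [this, hN, hmo.coeff_natDegree, mul_one]
  refine ⟨ρ, hρcard, hρpos, ?_⟩
  intro jj hjj
  have h2 := gc jj
  rw [hrep2, Polynomial.coeff_C_mul, Multiset.prod_X_add_C_coeff ρ (by omega)] at h2
  rw [hρcard] at h2
  rw [← h2, hlead]

lemma descFactorial_pos' {a b : ℕ} (h : b ≤ a) : 0 < a.descFactorial b :=
  Nat.pos_of_ne_zero fun h0 => by
    have := Nat.descFactorial_eq_zero_iff_lt.1 h0; omega

lemma prodP_monic {n : ℕ} (t : Finset (Fin n)) (x : Fin n → ℝ) :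
    (∏ i ∈ t, (X + C (x i))).Monic :=
  monic_prod_of_monic _ _ fun i _ => monic_X_add_C _

lemma prodP_natDegree {n : ℕ} (t : Finset (Fin n)) (x : Fin n → ℝ) :
    (∏ i ∈ t, (X + C (x i))).natDegree = t.card := by
  rw [Polynomial.natDegree_prod _ _ fun i _ => (monic_X_add_C (x i)).ne_zero]
  simp

lemma prodP_roots_card {n : ℕ} (t : Finset (Fin n)) (x : Fin n → ℝ) :
    Multiset.card (∏ i ∈ t, (X + C (x i))).roots = t.card := by
  have hs : Splits (∏ i ∈ t, (X + C (x i))) := by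
    apply Splits.prod
    intro i _
    have h : (X : ℝ[X]) + C (x i) = X - C (-(x i)) := by rw [map_neg, sub_neg_eq_add]
    rw [h]
    exact Splits.X_sub_C _
  rw [splits_iff_card_roots.1 hs, prodP_natDegree]

lemma prodP_coeff {n : ℕ} (t : Finset (Fin n)) (x : Fin n → ℝ) (j : ℕ) (hj : j ≤ t.card) :
    (∏ i ∈ t, (X + C (x i))).coeff (t.card - j) = ∑ s ∈ t.powersetCard j, ∏ i ∈ s, x i := by
  rw [Finset.prod_X_add_C_coeff _ _ (Nat.sub_le _ _), Nat.sub_sub_self hj]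

lemma sigmaElem_zero (n : ℕ) (x : Fin n → ℝ) : sigmaElem n 0 x = 1 := by
  simp [sigmaElem]

lemma sigma_pos_of_nonneg (n k : ℕ) (hk1 : 1 ≤ k) (hkn : k ≤ n) (x : Fin n → ℝ)
    (hnn : ∀ j, 1 ≤ j → j ≤ k → 0 ≤ sigmaElem n j x) (hkpos : 0 < sigmaElem n k x) :
    ∀ j, 1 ≤ j → j ≤ k → 0 < sigmaElem n j x := by
  set P := ∏ i : Fin n, (X + C (x i)) with hP
  have hcardu : (univ : Finset (Fin n)).card = n := by simp
  have hPdeg : P.natDegree = n := by rw [hP, prodP_natDegree, hcardu]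
  have hco : ∀ j, j ≤ n → P.coeff (n - j) = sigmaElem n j x := by
    intro j hj
    have := prodP_coeff univ x j (by omega)
    rw [hcardu] at this
    rw [hP, this]
    rfl
  have hnnP : ∀ c, n - k ≤ c → 0 ≤ P.coeff c := by
    intro c hc
    rcases le_or_gt c n with h | h
    · have h2 : P.coeff c = sigmaElem n (n - c) x := by
        have := hco (n - c) (by omega)
        rwa [show n - (n - c) = c by omega] at this
      rw [h2]
      rcases Nat.eq_zero_or_pos (n - c) with h0 | h0
      · rw [h0, sigmaElem_zero]; norm_num
      · exact hnn _ h0 (by omega)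
    · rw [Polynomial.coeff_eq_zero_of_natDegree_lt (by omega)]
  have hposP : 0 < P.coeff (n - k) := by rw [hco k hkn]; exact hkpos
  have hroots : Multiset.card P.roots = P.natDegree := by
    rw [hP, prodP_roots_card, ← hP, hPdeg, hcardu]
  obtain ⟨ρ, hc, hpos, heq⟩ := poly_core P (prodP_monic _ _) hroots k hk1 (by omega)
    (by rw [hPdeg]; exact hnnP) (by rw [hPdeg]; exact hposP)
  rw [hPdeg] at heq
  intro j hj1 hjk
  have h3 := heq (k - j) (by omega)
  rw [show (k - j) + (n - k) = n - j by omega, show k - (k - j) = j by omega,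
    hco j (by omega)] at h3
  have hL : (0:ℝ) < (n.descFactorial (n - k) : ℝ) := by
    exact_mod_cast descFactorial_pos' (by omega)
  have hE : 0 < ρ.esymm j := esymm_pos ρ hpos j (by omega)
  have hB : (0:ℝ) < (((n - j) + (n - k) - (n-k)).descFactorial (n - k) : ℝ) := by
    exact_mod_cast descFactorial_pos' (by omega)
  nlinarith [h3, hL, hE]

lemma F1' (m : ℕ) : (m+1).descFactorial m = (m+1) * m.descFactorial m := by
  have a := Nat.succ_descFactorial_succ m m
  have b := Nat.descFactorial_succ (m+1) m
  rw [show m + 1 - m = 1 by omega, one_mul] at b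
  rw [← b]
  exact a

lemma F2' (k m : ℕ) (hk : 1 ≤ k) :
    k * ((k+m).descFactorial m) = (k+m) * ((k+m-1).descFactorial m) := by
  have a := Nat.descFactorial_succ (k+m) m
  rw [show k + m - m = k by omega] at a
  have b := Nat.succ_descFactorial_succ (k+m-1) m
  rw [show k+m-1+1 = k+m by omega] at b
  rw [← a, b]

lemma key_bound (n k : ℕ) (hk : 2 ≤ k) (hkn : k ≤ n) (x : Fin n → ℝ)
    (hσ : ∀ j, 1 ≤ j → j ≤ k → 0 ≤ sigmaElem n j x) (i : Fin n) :
    ((k : ℝ) - n) / (n * ((k : ℝ) - 1)) * sigmaElem n 1 x ≤ x i := by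
  have hn2 : 2 ≤ n := le_trans hk hkn
  have hσ1 : 0 ≤ sigmaElem n 1 x := hσ 1 le_rfl (by omega)
  have hKcast : (2:ℝ) ≤ (k:ℝ) := by exact_mod_cast hk
  have hNcast : (2:ℝ) ≤ (n:ℝ) := by exact_mod_cast hn2
  have hKN : (k:ℝ) ≤ (n:ℝ) := by exact_mod_cast hkn
  have hden : (0:ℝ) < n * ((k:ℝ) - 1) := by nlinarith
  rcases le_or_gt 0 (x i) with hxi | hxi
  · have hc0 : ((k:ℝ) - n) / (n * ((k:ℝ) - 1)) ≤ 0 :=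
      div_nonpos_iff.2 (Or.inr ⟨by linarith, hden.le⟩)
    calc ((k:ℝ) - n) / (n * ((k:ℝ) - 1)) * sigmaElem n 1 x ≤ 0 :=
          mul_nonpos_iff.2 (Or.inr ⟨hc0, hσ1⟩)
      _ ≤ x i := hxi
  · set s : ℝ := -x i with hs
    have hspos : 0 < s := by rw [hs]; linarith
    set t : Finset (Fin n) := univ.erase i with ht
    have htc : t.card = n - 1 := by
      rw [ht, Finset.card_erase_of_mem (mem_univ i), Finset.card_univ, Fintype.card_fin]
    set p := ∏ j ∈ t, (X + C (x j)) with hp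
    have hpdeg : p.natDegree = n - 1 := by rw [hp, prodP_natDegree, htc]
    set σ' : ℕ → ℝ := fun j => ∑ u ∈ t.powersetCard j, ∏ l ∈ u, x l with hσ'
    have hσ'0 : σ' 0 = 1 := by simp [hσ']
    have hco : ∀ j, j ≤ n - 1 → p.coeff (n - 1 - j) = σ' j := by
      intro j hj
      have h2 := prodP_coeff t x j (by omega)
      rw [htc] at h2
      exact h2
    set P := ∏ l : Fin n, (X + C (x l)) with hP
    have hPp : P = (X + C (x i)) * p := by
      rw [hP, hp, ht]
      exact (Finset.mul_prod_erase univ (fun l => X + C (x l)) (mem_univ i)).symm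
    have hcoP : ∀ j, j ≤ n → P.coeff (n - j) = sigmaElem n j x := by
      intro j hj
      have h2 := prodP_coeff univ x j (by simpa using hj)
      rw [Finset.card_univ, Fintype.card_fin] at h2
      rw [hP, h2]
      rfl
    have hrel : ∀ j, 1 ≤ j → j ≤ n - 1 →
        sigmaElem n j x = σ' j + x i * σ' (j - 1) := by
      intro j hj1 hjn
      rw [← hcoP j (by omega), hPp, add_mul, Polynomial.coeff_add,
        show n - j = (n - 1 - j) + 1 by omega, Polynomial.coeff_X_mul,
        Polynomial.coeff_C_mul, hco j hjn,
        show n - 1 - j + 1 = n - 1 - (j - 1) by omega, hco (j-1) (by omega)]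
    have hchain : ∀ j, j ≤ k → j ≤ n - 1 → s ^ j ≤ σ' j := by
      intro j
      induction j with
      | zero => intro _ _; simp [hσ'0]
      | succ j ih =>
        intro hjk hjn
        have ihj := ih (by omega) (by omega)
        have hrelj := hrel (j+1) (by omega) hjn
        have hσj1 := hσ (j+1) (by omega) hjk
        rw [hrelj] at hσj1
        simp only [Nat.add_sub_cancel] at hσj1
        have hmul : s * s ^ j ≤ s * σ' j := mul_le_mul_of_nonneg_left ihj hspos.le
        calc s ^ (j+1) = s * s ^ j := by ring
          _ ≤ s * σ' j := hmul
          _ ≤ σ' (j+1) := by rw [hs]; linarith [hσj1]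
    rcases eq_or_lt_of_le hkn with hkeq | hklt
    · exfalso
      have h1 := hchain (n-1) (by omega) le_rfl
      have h2 := hσ n (by omega) (by omega)
      have hreln : sigmaElem n n x = x i * σ' (n - 1) := by
        rw [← hcoP n le_rfl, Nat.sub_self, hPp, add_mul, Polynomial.coeff_add,
          Polynomial.mul_coeff_zero, Polynomial.coeff_X_zero, zero_mul, zero_add,
          Polynomial.coeff_C_mul, show (0:ℕ) = n - 1 - (n-1) by omega, hco (n-1) le_rfl]
      rw [hreln] at h2
      have hσ'pos : 0 < σ' (n-1) := lt_of_lt_of_le (pow_pos hspos _) h1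
      nlinarith
    · have hkn1 : k ≤ n - 1 := by omega
      have hKNlt : (k:ℝ) < (n:ℝ) := by exact_mod_cast hklt
      have hchain' : ∀ j, j ≤ k → 0 < σ' j := fun j hj =>
        lt_of_lt_of_le (pow_pos hspos j) (hchain j hj (by omega))
      have hroots : Multiset.card p.roots = p.natDegree := by
        rw [hp, prodP_roots_card, ← hp, hpdeg, htc]
      have hnnp : ∀ c, p.natDegree - k ≤ c → 0 ≤ p.coeff c := by
        intro c hc
        rw [hpdeg] at hc
        rcases le_or_gt c (n-1) with h | h
        · have h2 : p.coeff c = σ' (n - 1 - c) := by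
            have h3 := hco (n - 1 - c) (by omega)
            rwa [show n - 1 - (n - 1 - c) = c by omega] at h3
          rw [h2]
          exact (hchain' _ (by omega)).le
        · rw [Polynomial.coeff_eq_zero_of_natDegree_lt (by omega)]
      have hposp : 0 < p.coeff (p.natDegree - k) := by
        rw [hpdeg, hco k hkn1]
        exact hchain' k le_rfl
      obtain ⟨ρ, hρc, hρpos, heq⟩ := poly_core p (by rw [hp]; exact prodP_monic t x) hroots
        k (by omega) (by omega) hnnp hposp
      rw [hpdeg] at heq
      set m : ℕ := n - 1 - k with hm
      -- esymm positivity and AM-HM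
      have hEk : 0 < ρ.esymm k := esymm_pos ρ hρpos k (by omega)
      have hEk1 : 0 < ρ.esymm (k-1) := esymm_pos ρ hρpos (k-1) (by omega)
      have hE1 : 0 < ρ.esymm 1 := esymm_pos ρ hρpos 1 (by omega)
      have hAM : (k:ℝ)^2 * ρ.esymm k ≤ ρ.esymm 1 * ρ.esymm (k - 1) := by
        have h4 := esymm_amhm ρ hρpos (by omega)
        rwa [hρc] at h4
      -- the three equations
      have E0 := heq 0 (by omega)
      rw [Nat.zero_add, hco k (by omega), Nat.sub_zero] at E0
      have E1 := heq 1 (by omega)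
      rw [show (1 + m : ℕ) = n - 1 - (k - 1) by omega] at E1
      rw [hco (k-1) (by omega), show k - 1 = k - 1 by rfl] at E1
      have E2 := heq (k-1) (by omega)
      rw [show ((k - 1) + m : ℕ) = n - 1 - 1 by omega, hco 1 (by omega),
        show k - (k-1) = 1 by omega] at E2
      -- identify the descFactorial constants
      have hmR : (m:ℝ) = (n:ℝ) - 1 - k := by
        rw [hm, Nat.cast_sub (by omega), Nat.cast_sub (by omega)]
        push_cast
        ring
      have hb0pos : (0:ℝ) < (m.descFactorial m : ℝ) := by
        exact_mod_cast descFactorial_pos' le_rfl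
      have hLpos : (0:ℝ) < ((n-1).descFactorial m : ℝ) := by
        exact_mod_cast descFactorial_pos' (by omega)
      have hbkpos : (0:ℝ) < ((n-1-1).descFactorial m : ℝ) := by
        exact_mod_cast descFactorial_pos' (by omega)
      have hb1R : (((n - 1 - (k-1)).descFactorial m : ℕ) : ℝ)
          = ((n:ℝ) - k) * (m.descFactorial m : ℝ) := by
        rw [show n - 1 - (k-1) = m + 1 by omega, F1']
        push_cast
        rw [hmR]
        ring
      have hF2R : (k:ℝ) * ((n-1).descFactorial m : ℝ)
          = ((n:ℝ) - 1) * ((n-1-1).descFactorial m : ℝ) := by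
        have hnat := F2' k m (by omega)
        have h5 : ((n:ℕ) - 1) = k + m := by omega
        rw [h5]
        have hcast := congrArg (Nat.cast : ℕ → ℝ) hnat
        push_cast at hcast
        rw [hcast, hmR]
        ring
      -- top inequality
      have htop : s * σ' (k-1) ≤ σ' k := by
        rw [hs]
        have h2 := hσ k (by omega) le_rfl
        rw [hrel k (by omega) hkn1] at h2
        linarith
      -- chain of estimates
      have hNK : (0:ℝ) < (n:ℝ) - k := by linarith
      have step1 : s * ρ.esymm (k-1) * ((n-1).descFactorial m : ℝ)
          ≤ ((n:ℝ) - k) * ρ.esymm k * ((n-1).descFactorial m : ℝ) := by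
        calc s * ρ.esymm (k-1) * ((n-1).descFactorial m : ℝ)
            = s * (((n-1).descFactorial m : ℝ) * ρ.esymm (k-1)) := by ring
          _ = s * (((n - 1 - (k-1)).descFactorial m : ℝ) * σ' (k-1)) := by rw [E1]
          _ = (((n:ℝ) - k) * (m.descFactorial m : ℝ)) * (s * σ' (k-1)) := by
              rw [hb1R]; ring
          _ ≤ (((n:ℝ) - k) * (m.descFactorial m : ℝ)) * σ' k := by
              apply mul_le_mul_of_nonneg_left htop
              positivity
          _ = ((n:ℝ) - k) * ((m.descFactorial m : ℝ) * σ' k) := by ring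
          _ = ((n:ℝ) - k) * (((n-1).descFactorial m : ℝ) * ρ.esymm k) := by rw [E0]
          _ = ((n:ℝ) - k) * ρ.esymm k * ((n-1).descFactorial m : ℝ) := by ring
      have step2 : s * ρ.esymm (k-1) ≤ ((n:ℝ) - k) * ρ.esymm k :=
        le_of_mul_le_mul_right step1 hLpos
      have step3 : (k:ℝ)^2 * s ≤ ((n:ℝ) - k) * ρ.esymm 1 := by
        have h1 : ((k:ℝ)^2 * s) * ρ.esymm (k-1)
            ≤ (((n:ℝ) - k) * ρ.esymm 1) * ρ.esymm (k-1) := by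
          calc ((k:ℝ)^2 * s) * ρ.esymm (k-1) = (k:ℝ)^2 * (s * ρ.esymm (k-1)) := by ring
            _ ≤ (k:ℝ)^2 * (((n:ℝ) - k) * ρ.esymm k) :=
                mul_le_mul_of_nonneg_left step2 (by positivity)
            _ = ((n:ℝ) - k) * ((k:ℝ)^2 * ρ.esymm k) := by ring
            _ ≤ ((n:ℝ) - k) * (ρ.esymm 1 * ρ.esymm (k-1)) :=
                mul_le_mul_of_nonneg_left hAM hNK.le
            _ = (((n:ℝ) - k) * ρ.esymm 1) * ρ.esymm (k-1) := by ring
        exact le_of_mul_le_mul_right h1 hEk1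
      have hfinal : (k:ℝ) * ((n:ℝ)-1) * s ≤ ((n:ℝ) - k) * σ' 1 := by
        have h2 : ((k:ℝ)*((n:ℝ)-1)*s) * ((n-1-1).descFactorial m : ℝ)
            ≤ (((n:ℝ) - k) * σ' 1) * ((n-1-1).descFactorial m : ℝ) := by
          calc ((k:ℝ)*((n:ℝ)-1)*s) * ((n-1-1).descFactorial m : ℝ)
              = ((k:ℝ)*s) * (((n:ℝ)-1) * ((n-1-1).descFactorial m : ℝ)) := by ring
            _ = ((k:ℝ)*s) * ((k:ℝ) * ((n-1).descFactorial m : ℝ)) := by rw [hF2R]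
            _ = ((k:ℝ)^2 * s) * ((n-1).descFactorial m : ℝ) := by ring
            _ ≤ (((n:ℝ) - k) * ρ.esymm 1) * ((n-1).descFactorial m : ℝ) :=
                mul_le_mul_of_nonneg_right step3 hLpos.le
            _ = ((n:ℝ) - k) * (((n-1).descFactorial m : ℝ) * ρ.esymm 1) := by ring
            _ = ((n:ℝ) - k) * (((n-1-1).descFactorial m : ℝ) * σ' 1) := by rw [E2]
            _ = (((n:ℝ) - k) * σ' 1) * ((n-1-1).descFactorial m : ℝ) := by ring
        exact le_of_mul_le_mul_right h2 hbkpos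
      have hσ1eq : sigmaElem n 1 x = σ' 1 + x i := by
        rw [hrel 1 le_rfl (by omega)]
        simp [hσ'0]
      rw [div_mul_eq_mul_div, div_le_iff₀ hden, hσ1eq]
      have hxs : x i = -s := by rw [hs]; ring
      rw [hxs]
      have hring : ((k:ℝ) - n) * (σ' 1 + -s) - (-s * ((n:ℝ) * ((k:ℝ) - 1)))
          = (k:ℝ)*((n:ℝ)-1)*s - ((n:ℝ)-k)*σ' 1 := by ring
      linarith [hfinal, hring]

lemma sigmaElem_continuous (n j : ℕ) : Continuous (sigmaElem n j) := by
  unfold sigmaElem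
  exact continuous_finset_sum _ fun s _ => continuous_finset_prod _ fun i _ => continuous_apply i

lemma sigmaElem_one_pos (n j : ℕ) (hj : j ≤ n) : 0 < sigmaElem n j (fun _ => 1) := by
  have h1 : sigmaElem n j (fun _ => 1)
      = (((Finset.univ : Finset (Fin n)).powersetCard j).card : ℝ) := by
    unfold sigmaElem
    simp
  rw [h1, Finset.card_powersetCard, Finset.card_univ, Fintype.card_fin]
  exact_mod_cast Nat.choose_pos hj

lemma gamma_subset_V (n k : ℕ) (hk1 : 1 ≤ k) (hkn : k ≤ n) :
    GammaPlus n k ⊆ ⋂ j ∈ Finset.Icc 1 k, {x : Fin n → ℝ | 0 < sigmaElem n j x} := by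
  set V := ⋂ j ∈ Finset.Icc 1 k, {x : Fin n → ℝ | 0 < sigmaElem n j x} with hV
  have hmemV : ∀ x, x ∈ V ↔ ∀ j, 1 ≤ j → j ≤ k → 0 < sigmaElem n j x := by
    intro x
    simp only [hV, Set.mem_iInter, Set.mem_setOf_eq, Finset.mem_Icc, and_imp]
  have hVopen : IsOpen V := by
    apply isOpen_biInter_finset
    intro j _
    exact isOpen_lt continuous_const (sigmaElem_continuous n j)
  have hclV : ∀ x ∈ closure V, ∀ j, 1 ≤ j → j ≤ k → 0 ≤ sigmaElem n j x := by
    intro x hx j hj1 hjk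
    have hVsub : V ⊆ {y : Fin n → ℝ | 0 ≤ sigmaElem n j y} := by
      intro y hy
      exact ((hmemV y).1 hy j hj1 hjk).le
    have hcl : IsClosed {y : Fin n → ℝ | 0 ≤ sigmaElem n j y} :=
      isClosed_le continuous_const (sigmaElem_continuous n j)
    exact closure_minimal hVsub hcl hx
  have hkey : ∀ x, 0 < sigmaElem n k x → x ∈ closure V → x ∈ V := by
    intro x hxk hxcl
    rw [hmemV]
    exact sigma_pos_of_nonneg n k hk1 hkn x (hclV x hxcl) hxk
  have hWopen : IsOpen (closure V)ᶜ := isClosed_closure.isOpen_compl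
  have hdisj : Disjoint V (closure V)ᶜ :=
    Set.disjoint_compl_right_iff_subset.2 subset_closure
  have hsub : GammaPlus n k ⊆ V ∪ (closure V)ᶜ := by
    intro x hx
    have hxk : 0 < sigmaElem n k x :=
      connectedComponentIn_subset {y : Fin n → ℝ | 0 < sigmaElem n k y} (fun _ => 1) hx
    by_cases hxcl : x ∈ closure V
    · exact Or.inl (hkey x hxk hxcl)
    · exact Or.inr hxcl
  have h1V : (fun _ => (1:ℝ)) ∈ V := by
    rw [hmemV]
    intro j hj1 hjk
    exact sigmaElem_one_pos n j (by omega)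
  have h1G : (fun _ => (1:ℝ)) ∈ GammaPlus n k :=
    mem_connectedComponentIn (by simp only [Set.mem_setOf_eq]; exact sigmaElem_one_pos n k hkn)
  exact IsPreconnected.subset_left_of_subset_union hVopen hWopen hdisj hsub
    ⟨fun _ => 1, h1G, h1V⟩ isPreconnected_connectedComponentIn

lemma sigmaElem_one_eq_sum (n : ℕ) (x : Fin n → ℝ) : sigmaElem n 1 x = ∑ i, x i := by
  unfold sigmaElem
  rw [Finset.powersetCard_one, Finset.sum_map]
  simp

/-- Lemma 1, first part: if `A_Λ ∈ Γ̄_k^+` with `2 ≤ k ≤ n`, `n ≥ 3`,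
then `min_i λ_i ≥ ((2k−n)/(2n(k−1))) Σ_i λ_i`. -/
theorem min_ge_of_ALam_mem (n k : ℕ) (hn : 3 ≤ n) (hk : 2 ≤ k) (hkn : k ≤ n)
    (Λ : Fin n → ℝ) (h : ALam n Λ ∈ closure (GammaPlus n k)) :
    ∀ i, (2 * (k : ℝ) - n) / (2 * n * ((k : ℝ) - 1)) * ∑ j, Λ j ≤ Λ i := by
  intro i
  set A := ALam n Λ with hA
  have hnn : ∀ j, 1 ≤ j → j ≤ k → 0 ≤ sigmaElem n j A := by
    intro j hj1 hjk
    have hsub : GammaPlus n k ⊆ {y : Fin n → ℝ | 0 ≤ sigmaElem n j y} := by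
      intro y hy
      have h3 := gamma_subset_V n k (by omega) hkn hy
      simp only [Set.mem_iInter, Set.mem_setOf_eq] at h3
      exact (h3 j (Finset.mem_Icc.2 ⟨hj1, hjk⟩)).le
    have hcl : IsClosed {y : Fin n → ℝ | 0 ≤ sigmaElem n j y} :=
      isClosed_le continuous_const (sigmaElem_continuous n j)
    exact closure_minimal hsub hcl h
  have hbound := key_bound n k hk hkn A hnn i
  -- arithmetic
  set S : ℝ := ∑ j, Λ j with hS
  have hsumA : sigmaElem n 1 A = S - n * (S / (2 * ((n:ℝ) - 1))) := by
    rw [sigmaElem_one_eq_sum]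
    have h2 : ∀ l, A l = Λ l - S / (2 * ((n:ℝ) - 1)) := fun l => rfl
    simp only [h2]
    rw [Finset.sum_sub_distrib, Finset.sum_const, Finset.card_univ, Fintype.card_fin,
      nsmul_eq_mul, ← hS]
  have hAi : A i = Λ i - S / (2 * ((n:ℝ) - 1)) := by rw [hA]; rfl
  rw [hsumA, hAi] at hbound
  have hNcast : (3:ℝ) ≤ (n:ℝ) := by exact_mod_cast hn
  have hKcast : (2:ℝ) ≤ (k:ℝ) := by exact_mod_cast hk
  have hKN : (k:ℝ) ≤ (n:ℝ) := by exact_mod_cast hkn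
  have hden1 : (0:ℝ) < (n:ℝ) * ((k:ℝ) - 1) := by nlinarith
  have hden2 : (0:ℝ) < 2 * ((n:ℝ) - 1) := by linarith
  -- combine: Λ i ≥ A-bound + S/(2(n-1))
  have hco : (2 * (k : ℝ) - n) / (2 * n * ((k : ℝ) - 1)) * S
      = ((k : ℝ) - n) / (n * ((k : ℝ) - 1)) * (S - n * (S / (2 * ((n:ℝ) - 1))))
        + S / (2 * ((n:ℝ) - 1)) := by
    have hne1 : ((n:ℝ) - 1) ≠ 0 := by linarith
    have hne2 : ((k:ℝ) - 1) ≠ 0 := by linarith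
    have hne3 : (n:ℝ) ≠ 0 := by linarith
    field_simp
    ring
  rw [hco]
  linarith [hbound]
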